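/- Let b₀, b₁ : [0,1] → ℝ be C¹ with b₀(0)b₁′(0) − b₁(0)b₀′(0) ≠ 0, and let c₀, c₁ be (fixed) linear combinations of b₀ and b₁. Let c₀⁺, c₁⁺, c₂⁺ : [0,1] → ℝ be C², c₀⁻, c₁⁻ : [0,1] → ℝ be C¹, and α, β : [0,1] → ℝ be C¹. Let u(ξ₁,ξ₂) = Σ_{j=0}^{2} d₀ⱼ (c_j⁺(ξ₂)c₀(ξ₁) − β(ξ₂)(c_j⁺)′(ξ₂)c₁(ξ₁)) + Σ_{j=0}^{1} d₁ⱼ α(ξ₂)c_j⁻(ξ₂)b₁(ξ₁) for some coefficients d ∈ ℝ⁵, and let v(ξ₁,ξ₂) = Σ_{j₁,j₂ ∈ {0,1}} e_{j₁,j₂} b_{j₁}(ξ₁)b_{j₂}(ξ₂) for some coefficients e ∈ ℝ⁴. If u(0,0) = v(0,0), ∂₁u(0,0) = ∂₁v(0,0), ∂₂u(0,0) = ∂₂v(0,0) and ∂₁∂₂u(0,0) = ∂₁∂₂v(0,0), then u(ξ₁,0) = v(ξ₁,0) and ∂₂u(ξ₁,0) = ∂₂v(ξ₁,0) for all ξ₁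 ∈ [0,1]. -/

import Mathlib

/-- Partial derivative with respect to the first argument. -/
noncomputable def pd1 {E : Type*} [NormedAddCommGroup E] [NormedSpace ℝ E]
    (f : ℝ × ℝ → E) (x : ℝ × ℝ) : E := deriv (fun s => f (s, x.2)) x.1

/-- Partial derivative with respect to the second argument. -/
noncomputable def pd2 {E : Type*} [NormedAddCommGroup E] [NormedSpace ℝ E]
    (f : ℝ × ℝ → E) (x : ℝ × ℝ) : E := deriv (fun s => f (x.1, s)) x.2

/-- The generic element of the vertex-edge space (edge form, interface along
`{ξ₁ = 0}`), with coefficients `d = (d₀₀, d₀₁, d₀₂, d₁₀, d₁₁)`. -/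
noncomputable def fEdge (cp₀ cp₁ cp₂ cm₀ cm₁ c₀ c₁ b₁ α β : ℝ → ℝ)
    (d : ℝ × ℝ × ℝ × ℝ × ℝ) : ℝ × ℝ → ℝ := fun ξ =>
  d.1 * (cp₀ ξ.2 * c₀ ξ.1 - β ξ.2 * deriv cp₀ ξ.2 * c₁ ξ.1)
  + d.2.1 * (cp₁ ξ.2 * c₀ ξ.1 - β ξ.2 * deriv cp₁ ξ.2 * c₁ ξ.1)
  + d.2.2.1 * (cp₂ ξ.2 * c₀ ξ.1 - β ξ.2 * deriv cp₂ ξ.2 * c₁ ξ.1)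
  + d.2.2.2.1 * (α ξ.2 * cm₀ ξ.2 * b₁ ξ.1)
  + d.2.2.2.2 * (α ξ.2 * cm₁ ξ.2 * b₁ ξ.1)

/-! ### Auxiliary lemmas -/

lemma aux_wronskian (a b c dd X Y : ℝ) (hW : a * dd - b * c ≠ 0)
    (h0 : X * a + Y * b = 0) (h1 : X * c + Y * dd = 0) : X = 0 ∧ Y = 0 := by
  constructor
  · have hX : X * (a * dd - b * c) = 0 := by
      have : X * (a * dd - b * c) = (X * a + Y * b) * dd - (X * c + Y * dd) * b := by ring
      rw [this, h0, h1]; ring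
    exact (mul_eq_zero.mp hX).resolve_right hW
  · have hY : Y * (a * dd - b * c) = 0 := by
      have : Y * (a * dd - b * c) = (X * c + Y * dd) * a - (X * a + Y * b) * c := by ring
      rw [this, h0, h1]; ring
    exact (mul_eq_zero.mp hY).resolve_right hW

lemma aux_deriv_lin (b₀ b₁ : ℝ → ℝ) (hb₀ : Differentiable ℝ b₀) (hb₁ : Differentiable ℝ b₁)
    (X Y : ℝ) :
    deriv (fun s => X * b₀ s + Y * b₁ s) 0 = X * deriv b₀ 0 + Y * deriv b₁ 0 :=
  (((hb₀ 0).hasDerivAt.const_mul X).add ((hb₁ 0).hasDerivAt.const_mul Y)).deriv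

lemma aux_hdP (β cp : ℝ → ℝ) (hβ : Differentiable ℝ β) (hcp : Differentiable ℝ cp)
    (hcp' : Differentiable ℝ (deriv cp)) (a b : ℝ) :
    HasDerivAt (fun t => cp t * a - β t * deriv cp t * b)
      (deriv cp 0 * a - (deriv β 0 * deriv cp 0 + β 0 * deriv (deriv cp) 0) * b) 0 :=
  ((hcp 0).hasDerivAt.mul_const a).sub
    (((hβ 0).hasDerivAt.mul (hcp' 0).hasDerivAt).mul_const b)

lemma aux_hdM (α cm : ℝ → ℝ) (hα : Differentiable ℝ α) (hcm : Differentiable ℝ cm) (b : ℝ) :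
    HasDerivAt (fun t => α t * cm t * b)
      ((deriv α 0 * cm 0 + α 0 * deriv cm 0) * b) 0 :=
  ((hα 0).hasDerivAt.mul (hcm 0).hasDerivAt).mul_const b

lemma aux_pd1_00 (f : ℝ × ℝ → ℝ) : pd1 f (0, 0) = deriv (fun s => f (s, 0)) 0 := rfl

lemma aux_pd2_0 (f : ℝ × ℝ → ℝ) (ξ : ℝ) : pd2 f (ξ, 0) = deriv (fun s => f (ξ, s)) 0 := rfl

lemma aux_deriv2 (cp : ℝ → ℝ) (h : ContDiff ℝ 2 cp) : Differentiable ℝ (deriv cp) := by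
  have h2 : ContDiff ℝ ((1:WithTop ℕ∞) + 1) cp := by norm_num; exact_mod_cast h
  exact (contDiff_succ_iff_deriv.mp h2).2.2.differentiable one_ne_zero

/-- If a vertex-edge function `u` and a vertex-patch tensor-product function `v` match
in value, first derivatives and mixed second derivative at the vertex `(0,0)`, then
they coincide, together with their transversal derivatives, along the whole edge
`{ξ₂ = 0}`. -/
theorem stmt15 (b₀ b₁ : ℝ → ℝ) (hb₀ : ContDiff ℝ 1 b₀) (hb₁ : ContDiff ℝ 1 b₁)
    (hW : b₀ 0 * deriv b₁ 0 - b₁ 0 * deriv b₀ 0 ≠ 0)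
    (p₀ q₀ p₁ q₁ : ℝ) (c₀ c₁ : ℝ → ℝ)
    (hc₀ : c₀ = fun ξ => p₀ * b₀ ξ + q₀ * b₁ ξ)
    (hc₁ : c₁ = fun ξ => p₁ * b₀ ξ + q₁ * b₁ ξ)
    (cp₀ cp₁ cp₂ : ℝ → ℝ)
    (hcp₀ : ContDiff ℝ 2 cp₀) (hcp₁ : ContDiff ℝ 2 cp₁) (hcp₂ : ContDiff ℝ 2 cp₂)
    (cm₀ cm₁ : ℝ → ℝ) (hcm₀ : ContDiff ℝ 1 cm₀) (hcm₁ : ContDiff ℝ 1 cm₁)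
    (α β : ℝ → ℝ) (hα : ContDiff ℝ 1 α) (hβ : ContDiff ℝ 1 β)
    (d : ℝ × ℝ × ℝ × ℝ × ℝ) (e : ℝ × ℝ × ℝ × ℝ)
    (u v : ℝ × ℝ → ℝ)
    (hu : u = fEdge cp₀ cp₁ cp₂ cm₀ cm₁ c₀ c₁ b₁ α β d)
    (hv : v = fun ξ => e.1 * b₀ ξ.1 * b₀ ξ.2 + e.2.1 * b₁ ξ.1 * b₀ ξ.2
      + e.2.2.1 * b₀ ξ.1 * b₁ ξ.2 + e.2.2.2 * b₁ ξ.1 * b₁ ξ.2)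
    (h00 : u (0, 0) = v (0, 0)) (h10 : pd1 u (0, 0) = pd1 v (0, 0))
    (h01 : pd2 u (0, 0) = pd2 v (0, 0))
    (h11 : pd1 (pd2 u) (0, 0) = pd1 (pd2 v) (0, 0)) :
    ∀ ξ₁ ∈ Set.Icc (0:ℝ) 1, u (ξ₁, 0) = v (ξ₁, 0) ∧ pd2 u (ξ₁, 0) = pd2 v (ξ₁, 0) := by
  have Db₀ : Differentiable ℝ b₀ := hb₀.differentiable one_ne_zero
  have Db₁ : Differentiable ℝ b₁ := hb₁.differentiable one_ne_zero
  have Dα : Differentiable ℝ α := hα.differentiable one_ne_zero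
  have Dβ : Differentiable ℝ β := hβ.differentiable one_ne_zero
  have Dcm₀ : Differentiable ℝ cm₀ := hcm₀.differentiable one_ne_zero
  have Dcm₁ : Differentiable ℝ cm₁ := hcm₁.differentiable one_ne_zero
  have Dcp₀ : Differentiable ℝ cp₀ := hcp₀.differentiable two_ne_zero
  have Dcp₁ : Differentiable ℝ cp₁ := hcp₁.differentiable two_ne_zero
  have Dcp₂ : Differentiable ℝ cp₂ := hcp₂.differentiable two_ne_zero
  have Dcp₀' : Differentiable ℝ (deriv cp₀) := aux_deriv2 cp₀ hcp₀
  have Dcp₁' : Differentiable ℝ (deriv cp₁) := aux_deriv2 cp₁ hcp₁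
  have Dcp₂' : Differentiable ℝ (deriv cp₂) := aux_deriv2 cp₂ hcp₂
  -- canonical form of u on the edge
  obtain ⟨XU, YU, hU0⟩ : ∃ X Y : ℝ, ∀ ξ : ℝ, u (ξ, 0) = X * b₀ ξ + Y * b₁ ξ := by
    refine ⟨(d.1 * cp₀ 0 + d.2.1 * cp₁ 0 + d.2.2.1 * cp₂ 0) * p₀
        - β 0 * (d.1 * deriv cp₀ 0 + d.2.1 * deriv cp₁ 0 + d.2.2.1 * deriv cp₂ 0) * p₁,
      (d.1 * cp₀ 0 + d.2.1 * cp₁ 0 + d.2.2.1 * cp₂ 0) * q₀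
        - β 0 * (d.1 * deriv cp₀ 0 + d.2.1 * deriv cp₁ 0 + d.2.2.1 * deriv cp₂ 0) * q₁
        + α 0 * (d.2.2.2.1 * cm₀ 0 + d.2.2.2.2 * cm₁ 0), fun ξ => ?_⟩
    simp only [hu, fEdge, hc₀, hc₁]
    ring
  -- canonical form of v on the edge
  obtain ⟨XV, YV, hV0⟩ : ∃ X Y : ℝ, ∀ ξ : ℝ, v (ξ, 0) = X * b₀ ξ + Y * b₁ ξ := by
    refine ⟨e.1 * b₀ 0 + e.2.2.1 * b₁ 0, e.2.1 * b₀ 0 + e.2.2.2 * b₁ 0, fun ξ => ?_⟩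
    simp only [hv]
    ring
  -- canonical form of ∂₂u on the edge
  obtain ⟨XU', YU', hU2⟩ : ∃ X Y : ℝ, ∀ ξ : ℝ, pd2 u (ξ, 0) = X * b₀ ξ + Y * b₁ ξ := by
    refine ⟨(d.1 * deriv cp₀ 0 + d.2.1 * deriv cp₁ 0 + d.2.2.1 * deriv cp₂ 0) * p₀
        - (deriv β 0 * (d.1 * deriv cp₀ 0 + d.2.1 * deriv cp₁ 0 + d.2.2.1 * deriv cp₂ 0)
          + β 0 * (d.1 * deriv (deriv cp₀) 0 + d.2.1 * deriv (deriv cp₁) 0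
            + d.2.2.1 * deriv (deriv cp₂) 0)) * p₁,
      (d.1 * deriv cp₀ 0 + d.2.1 * deriv cp₁ 0 + d.2.2.1 * deriv cp₂ 0) * q₀
        - (deriv β 0 * (d.1 * deriv cp₀ 0 + d.2.1 * deriv cp₁ 0 + d.2.2.1 * deriv cp₂ 0)
          + β 0 * (d.1 * deriv (deriv cp₀) 0 + d.2.1 * deriv (deriv cp₁) 0
            + d.2.2.1 * deriv (deriv cp₂) 0)) * q₁
        + (deriv α 0 * (d.2.2.2.1 * cm₀ 0 + d.2.2.2.2 * cm₁ 0)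
          + α 0 * (d.2.2.2.1 * deriv cm₀ 0 + d.2.2.2.2 * deriv cm₁ 0)), fun ξ => ?_⟩
    have H : HasDerivAt (fun t => u (ξ, t))
        (d.1 * (deriv cp₀ 0 * c₀ ξ
            - (deriv β 0 * deriv cp₀ 0 + β 0 * deriv (deriv cp₀) 0) * c₁ ξ)
          + d.2.1 * (deriv cp₁ 0 * c₀ ξ
            - (deriv β 0 * deriv cp₁ 0 + β 0 * deriv (deriv cp₁) 0) * c₁ ξ)
          + d.2.2.1 * (deriv cp₂ 0 * c₀ ξ
            - (deriv β 0 * deriv cp₂ 0 + β 0 * deriv (deriv cp₂) 0) * c₁ ξ)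
          + d.2.2.2.1 * ((deriv α 0 * cm₀ 0 + α 0 * deriv cm₀ 0) * b₁ ξ)
          + d.2.2.2.2 * ((deriv α 0 * cm₁ 0 + α 0 * deriv cm₁ 0) * b₁ ξ)) 0 := by
      rw [hu]
      exact (((((aux_hdP β cp₀ Dβ Dcp₀ Dcp₀' (c₀ ξ) (c₁ ξ)).const_mul d.1).add
        ((aux_hdP β cp₁ Dβ Dcp₁ Dcp₁' (c₀ ξ) (c₁ ξ)).const_mul d.2.1)).add
        ((aux_hdP β cp₂ Dβ Dcp₂ Dcp₂' (c₀ ξ) (c₁ ξ)).const_mul d.2.2.1)).add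
        ((aux_hdM α cm₀ Dα Dcm₀ (b₁ ξ)).const_mul d.2.2.2.1)).add
        ((aux_hdM α cm₁ Dα Dcm₁ (b₁ ξ)).const_mul d.2.2.2.2)
    rw [aux_pd2_0, H.deriv, hc₀, hc₁]
    ring
  -- canonical form of ∂₂v on the edge
  obtain ⟨XV', YV', hV2⟩ : ∃ X Y : ℝ, ∀ ξ : ℝ, pd2 v (ξ, 0) = X * b₀ ξ + Y * b₁ ξ := by
    refine ⟨e.1 * deriv b₀ 0 + e.2.2.1 * deriv b₁ 0,
      e.2.1 * deriv b₀ 0 + e.2.2.2 * deriv b₁ 0, fun ξ => ?_⟩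
    have H : HasDerivAt (fun t => v (ξ, t))
        (e.1 * b₀ ξ * deriv b₀ 0 + e.2.1 * b₁ ξ * deriv b₀ 0
          + e.2.2.1 * b₀ ξ * deriv b₁ 0 + e.2.2.2 * b₁ ξ * deriv b₁ 0) 0 := by
      rw [hv]
      exact ((((Db₀ 0).hasDerivAt.const_mul (e.1 * b₀ ξ)).add
        ((Db₀ 0).hasDerivAt.const_mul (e.2.1 * b₁ ξ))).add
        ((Db₁ 0).hasDerivAt.const_mul (e.2.2.1 * b₀ ξ))).add
        ((Db₁ 0).hasDerivAt.const_mul (e.2.2.2 * b₁ ξ))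
    rw [aux_pd2_0, H.deriv]
    ring
  -- translate the four matching conditions
  have E0 : (XU - XV) * b₀ 0 + (YU - YV) * b₁ 0 = 0 := by
    have := h00
    rw [hU0 0, hV0 0] at this
    linear_combination this
  have E1 : (XU - XV) * deriv b₀ 0 + (YU - YV) * deriv b₁ 0 = 0 := by
    have lu : pd1 u (0, 0) = XU * deriv b₀ 0 + YU * deriv b₁ 0 := by
      rw [aux_pd1_00, show (fun s : ℝ => u (s, 0)) = fun s => XU * b₀ s + YU * b₁ s
        from funext hU0]
      exact aux_deriv_lin b₀ b₁ Db₀ Db₁ XU YU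
    have lv : pd1 v (0, 0) = XV * deriv b₀ 0 + YV * deriv b₁ 0 := by
      rw [aux_pd1_00, show (fun s : ℝ => v (s, 0)) = fun s => XV * b₀ s + YV * b₁ s
        from funext hV0]
      exact aux_deriv_lin b₀ b₁ Db₀ Db₁ XV YV
    have := h10
    rw [lu, lv] at this
    linear_combination this
  have E2 : (XU' - XV') * b₀ 0 + (YU' - YV') * b₁ 0 = 0 := by
    have := h01
    rw [hU2 0, hV2 0] at this
    linear_combination this
  have E3 : (XU' - XV') * deriv b₀ 0 + (YU' - YV') * deriv b₁ 0 = 0 := by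
    have lu : pd1 (pd2 u) (0, 0) = XU' * deriv b₀ 0 + YU' * deriv b₁ 0 := by
      rw [aux_pd1_00, show (fun s : ℝ => pd2 u (s, 0)) = fun s => XU' * b₀ s + YU' * b₁ s
        from funext hU2]
      exact aux_deriv_lin b₀ b₁ Db₀ Db₁ XU' YU'
    have lv : pd1 (pd2 v) (0, 0) = XV' * deriv b₀ 0 + YV' * deriv b₁ 0 := by
      rw [aux_pd1_00, show (fun s : ℝ => pd2 v (s, 0)) = fun s => XV' * b₀ s + YV' * b₁ s
        from funext hV2]
      exact aux_deriv_lin b₀ b₁ Db₀ Db₁ XV' YV'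
    have := h11
    rw [lu, lv] at this
    linear_combination this
  obtain ⟨hX, hY⟩ := aux_wronskian (b₀ 0) (b₁ 0) (deriv b₀ 0) (deriv b₁ 0) _ _ hW E0 E1
  obtain ⟨hX', hY'⟩ := aux_wronskian (b₀ 0) (b₁ 0) (deriv b₀ 0) (deriv b₁ 0) _ _ hW E2 E3
  have hXe : XU = XV := by linarith [sub_eq_zero.mp hX]
  have hYe : YU = YV := sub_eq_zero.mp hY
  have hXe' : XU' = XV' := sub_eq_zero.mp hX'
  have hYe' : YU' = YV' := sub_eq_zero.mp hY'
  intro ξ₁ _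
  exact ⟨by rw [hU0 ξ₁, hV0 ξ₁, hXe, hYe], by rw [hU2 ξ₁, hV2 ξ₁, hXe', hYe']⟩
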